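/- The function b solves the mixed problem on the sector with zero data: b extends continuously to the closed sector {(r cos θ, r sin θ) : r ≥ 0, 0 ≤ θ ≤ α} with value 0 at the origin; b(t, 0) = 0 for every t > 0 (vanishing Dirichlet data on the ray θ = 0); and for every r > 0 the directional derivative of (the real-analytic extension of) b at the point (r cos α, r sin α) in the unit direction (−sin α, cos α) normal to the ray θ = α equals 0 (vanishing Neumann data on the ray θ = α). -/

import Mathlib

/-- The open plane sector of aperture `α`. -/
def openSector (α : ℝ) : Set (ℝ × ℝ) :=
  {p : ℝ × ℝ | ∃ r θ : ℝ, 0 < r ∧ 0 < θ ∧ θ < α ∧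
    p = (r * Real.cos θ, r * Real.sin θ)}

/-- The closed plane sector of aperture `α`. -/
def closedSector (α : ℝ) : Set (ℝ × ℝ) :=
  {p : ℝ × ℝ | ∃ r θ : ℝ, 0 ≤ r ∧ 0 ≤ θ ∧ θ ≤ α ∧
    p = (r * Real.cos θ, r * Real.sin θ)}


open Complex Real

lemma cpow_polar (r ψ c : ℝ) (hr : 0 < r) (h1 : -Real.pi < ψ) (h2 : ψ ≤ Real.pi) :
    ((r : ℂ) * Complex.exp (ψ * Complex.I)) ^ (c : ℂ)
      = ((r ^ c : ℝ) : ℂ) * Complex.exp ((c * ψ : ℝ) * Complex.I) := by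
  have hz : (r : ℂ) * Complex.exp (ψ * Complex.I) ≠ 0 := by
    apply mul_ne_zero
    · exact_mod_cast hr.ne'
    · exact Complex.exp_ne_zero _
  have habs : ‖(r : ℂ) * Complex.exp (ψ * Complex.I)‖ = r := by
    rw [norm_mul, Complex.norm_real, Real.norm_eq_abs, abs_of_pos hr]
    simp [Complex.norm_exp]
  have harg : Complex.arg ((r : ℂ) * Complex.exp (ψ * Complex.I)) = ψ := by
    rw [Complex.exp_mul_I]
    exact Complex.arg_mul_cos_add_sin_mul_I hr ⟨h1, h2⟩
  rw [Complex.cpow_def_of_ne_zero hz, Complex.log, habs, harg]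
  rw [Real.rpow_def_of_pos hr, Complex.ofReal_exp, ← Complex.exp_add]
  congr 1
  push_cast
  ring

noncomputable def gmap (α β : ℝ) (z : ℂ) : ℂ :=
  (Complex.exp ((-(α/2) : ℝ) * Complex.I) * z) ^ (β : ℂ) *
    Complex.exp (((β*α/2) : ℝ) * Complex.I)

noncomputable def Fmap (α β : ℝ) (p : ℝ × ℝ) : ℝ :=
  (gmap α β ((p.1 : ℂ) + (p.2 : ℂ) * Complex.I)).im

lemma polar_complex (r θ : ℝ) :
    ((r * Real.cos θ : ℝ) : ℂ) + ((r * Real.sin θ : ℝ) : ℂ) * Complex.I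
      = (r : ℂ) * Complex.exp ((θ : ℝ) * Complex.I) := by
  rw [Complex.exp_mul_I]
  rw [← Complex.ofReal_cos, ← Complex.ofReal_sin]; push_cast
  ring

lemma Fval (α β r θ : ℝ) (hr : 0 < r) (h1 : -Real.pi < θ - α/2) (h2 : θ - α/2 ≤ Real.pi) :
    Fmap α β (r * Real.cos θ, r * Real.sin θ) = r ^ β * Real.sin (β * θ) := by
  have hw : Complex.exp ((-(α/2) : ℝ) * Complex.I) *
      ((r : ℂ) * Complex.exp ((θ : ℝ) * Complex.I))
      = (r : ℂ) * Complex.exp (((θ - α/2 : ℝ)) * Complex.I) := by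
    rw [mul_left_comm, ← Complex.exp_add]
    congr 2
    push_cast; ring
  unfold Fmap gmap
  simp only [polar_complex]
  rw [hw, cpow_polar r _ β hr h1 h2, mul_assoc, ← Complex.exp_add]
  have : ((β * (θ - α/2) : ℝ) : ℂ) * Complex.I + ((β*α/2 : ℝ)) * Complex.I
      = ((β * θ : ℝ) : ℂ) * Complex.I := by push_cast; ring
  rw [this]
  simp only [Complex.mul_im, Complex.ofReal_re, Complex.ofReal_im, Complex.exp_ofReal_mul_I_im,
    Complex.exp_ofReal_mul_I_re, zero_mul, add_zero]

lemma polar_mem_slitPlane (r ψ : ℝ) (hr : 0 < r) (h1 : -Real.pi < ψ) (h2 : ψ < Real.pi) :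
    (r : ℂ) * Complex.exp ((ψ : ℝ) * Complex.I) ∈ Complex.slitPlane := by
  rw [Complex.mem_slitPlane_iff_arg]
  have harg : Complex.arg ((r : ℂ) * Complex.exp ((ψ : ℝ) * Complex.I)) = ψ := by
    rw [Complex.exp_mul_I]
    exact Complex.arg_mul_cos_add_sin_mul_I hr ⟨h1, h2.le⟩
  refine ⟨by rw [harg]; exact h2.ne, ?_⟩
  exact mul_ne_zero (by exact_mod_cast hr.ne') (Complex.exp_ne_zero _)

lemma gmap_contAt (α β : ℝ) {z : ℂ}
    (hz : Complex.exp ((-(α/2) : ℝ) * Complex.I) * z ∈ Complex.slitPlane) :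
    ContinuousAt (gmap α β) z := by
  unfold gmap
  exact ((continuousAt_cpow_const hz).comp
    ((continuous_const.mul continuous_id).continuousAt)).mul continuousAt_const

lemma gmap_contAt_zero (α β : ℝ) (hβ : 0 < β) : ContinuousAt (gmap α β) 0 := by
  unfold gmap
  refine ContinuousAt.mul ?_ continuousAt_const
  have h0 : ContinuousAt (fun x : ℂ × ℂ => x.1 ^ x.2) ((0 : ℂ), (β : ℂ)) :=
    Complex.continuousAt_cpow_zero_of_re_pos (by simpa using hβ)
  have h1 : ContinuousAt (fun z : ℂ =>
      ((Complex.exp ((-(α/2) : ℝ) * Complex.I) * z, (β : ℂ)) : ℂ × ℂ)) 0 := by fun_prop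
  exact h0.comp_of_eq h1 (by simp)

lemma incl_continuous : Continuous (fun p : ℝ × ℝ => (p.1 : ℂ) + (p.2 : ℂ) * Complex.I) := by
  fun_prop

lemma Fmap_contAt (α β : ℝ) (p : ℝ × ℝ)
    (h : ContinuousAt (gmap α β) ((p.1 : ℂ) + (p.2 : ℂ) * Complex.I)) :
    ContinuousAt (Fmap α β) p := by
  unfold Fmap
  exact Complex.continuous_im.continuousAt.comp
    (ContinuousAt.comp (f := fun q : ℝ × ℝ => (q.1 : ℂ) + (q.2 : ℂ) * Complex.I)
      h incl_continuous.continuousAt)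

lemma gmap_hasDerivAt (α β : ℝ) {z : ℂ}
    (hz : Complex.exp ((-(α/2) : ℝ) * Complex.I) * z ∈ Complex.slitPlane) :
    HasDerivAt (gmap α β)
      ((β : ℂ) * (Complex.exp ((-(α/2) : ℝ) * Complex.I) * z) ^ ((β : ℂ) - 1) *
        Complex.exp ((-(α/2) : ℝ) * Complex.I) * Complex.exp (((β*α/2) : ℝ) * Complex.I)) z := by
  have h1 : HasDerivAt (fun w : ℂ => Complex.exp ((-(α/2) : ℝ) * Complex.I) * w)
      (Complex.exp ((-(α/2) : ℝ) * Complex.I)) z := by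
    simpa using (hasDerivAt_id z).const_mul (Complex.exp ((-(α/2) : ℝ) * Complex.I))
  exact (h1.cpow_const hz).mul_const _

lemma Fmap_fderiv_eval (α β : ℝ) (p : ℝ × ℝ) {d : ℂ}
    (h : HasDerivAt (gmap α β) d ((p.1 : ℂ) + (p.2 : ℂ) * Complex.I)) (v : ℝ × ℝ) :
    fderiv ℝ (Fmap α β) p v = (((v.1 : ℂ) + (v.2 : ℂ) * Complex.I) * d).im := by
  set ι : ℝ × ℝ →L[ℝ] ℂ :=
    (Complex.equivRealProdCLM.symm : (ℝ × ℝ) ≃L[ℝ] ℂ).toContinuousLinearMap with hι'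
  have hιapp : ∀ q : ℝ × ℝ, ι q = (q.1 : ℂ) + (q.2 : ℂ) * Complex.I := fun q =>
    Complex.equivRealProdCLM_symm_apply q
  have hι : HasFDerivAt (fun q : ℝ × ℝ => (q.1 : ℂ) + (q.2 : ℂ) * Complex.I) ι p := by
    have heq : (fun q : ℝ × ℝ => (q.1 : ℂ) + (q.2 : ℂ) * Complex.I) = ⇑ι := by
      funext q; rw [hιapp]
    rw [heq]
    exact ι.hasFDerivAt
  have hg : HasFDerivAt (gmap α β)
      (((1 : ℂ →L[ℂ] ℂ).smulRight d).restrictScalars ℝ) ((p.1 : ℂ) + (p.2 : ℂ) * Complex.I) :=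
    h.hasFDerivAt.restrictScalars ℝ
  have H := (Complex.imCLM.hasFDerivAt).comp p (hg.comp p hι)
  have hFm : Fmap α β = (⇑Complex.imCLM ∘ (gmap α β ∘ fun q : ℝ × ℝ =>
      (q.1 : ℂ) + (q.2 : ℂ) * Complex.I)) := by
    funext q; rfl
  rw [hFm, H.fderiv]
  simp [hιapp, smul_eq_mul, mul_comm]
/-- Brown's function `b` solves the mixed problem on the sector
with zero data: it extends continuously to the closed sector with value `0`
at the origin; `b(t,0) = 0` for every `t > 0` (vanishing Dirichlet data on the
ray `θ = 0`); and for every `r > 0` the directional derivative of (the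
real-analytic extension of) `b` at `(r cos α, r sin α)` in the unit direction
`(−sin α, cos α)` normal to the ray `θ = α` vanishes (vanishing Neumann data
on the ray `θ = α`). -/
theorem brown_b_mixed_zero_data
    (α : ℝ) (hα₁ : Real.pi ≤ α) (hα₂ : α < 2 * Real.pi)
    (β : ℝ) (hβ : β = Real.pi / (2 * α))
    (δ : ℝ) (hδ : 0 < δ) (hαδ : α + 2 * δ < 2 * Real.pi)
    (b : ℝ × ℝ → ℝ)
    (hb : ∀ r θ : ℝ, 0 < r → -δ < θ → θ < α + δ →
      b (r * Real.cos θ, r * Real.sin θ) = r ^ β * Real.sin (β * θ)) :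
    (∃ B : ℝ × ℝ → ℝ, ContinuousOn B (closedSector α) ∧
      (∀ p ∈ openSector α, B p = b p) ∧ B ((0 : ℝ), (0 : ℝ)) = 0) ∧
    (∀ t : ℝ, 0 < t → b ((t : ℝ), (0 : ℝ)) = 0) ∧
    (∀ r : ℝ, 0 < r →
      fderiv ℝ b (r * Real.cos α, r * Real.sin α) (-Real.sin α, Real.cos α) = 0) := by
  have hπ := Real.pi_pos
  have hα0 : 0 < α := lt_of_lt_of_le hπ hα₁
  have hβpos : 0 < β := by rw [hβ]; positivity
  have hβα : β * α = Real.pi / 2 := by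
    rw [hβ]; field_simp
  have hα2π : α / 2 < Real.pi := by linarith
  refine ⟨⟨Fmap α β, ?_, ?_, ?_⟩, ?_, ?_⟩
  · -- continuity on the closed sector
    intro p hp
    obtain ⟨r, θ, hr, hθ0, hθα, hpeq⟩ := hp
    rcases hr.eq_or_lt with hr0 | hrpos
    · have hp0 : p = ((0 : ℝ), (0 : ℝ)) := by rw [hpeq, ← hr0]; simp
      rw [hp0]
      exact (Fmap_contAt α β _ (by simpa using gmap_contAt_zero α β hβpos)).continuousWithinAt
    · rw [hpeq]
      apply ContinuousAt.continuousWithinAt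
      apply Fmap_contAt
      have hz : ((r * Real.cos θ : ℝ) : ℂ) + ((r * Real.sin θ : ℝ) : ℂ) * Complex.I
          = (r : ℂ) * Complex.exp ((θ : ℝ) * Complex.I) := polar_complex r θ
      apply gmap_contAt
      rw [hz, mul_left_comm, ← Complex.exp_add]
      have : ((-(α/2) : ℝ) : ℂ) * Complex.I + (θ : ℝ) * Complex.I
          = ((θ - α/2 : ℝ) : ℂ) * Complex.I := by push_cast; ring
      rw [this]
      exact polar_mem_slitPlane r _ hrpos (by linarith) (by linarith)
  · -- agrees with b on the open sector
    rintro p ⟨r, θ, hrpos, hθ0, hθα, hpeq⟩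
    rw [hpeq, Fval α β r θ hrpos (by linarith) (by linarith),
      hb r θ hrpos (by linarith) (by linarith)]
  · -- value 0 at the origin
    unfold Fmap gmap
    norm_num
    rw [Complex.zero_cpow (by exact_mod_cast hβpos.ne')]
    simp
  · -- Dirichlet data
    intro t ht
    have := hb t 0 ht (by linarith) (by linarith)
    simpa using this
  · -- Neumann data
    intro r hr
    set c : ℂ := Complex.exp ((-(α/2) : ℝ) * Complex.I) with hc
    set p₀ : ℝ × ℝ := (r * Real.cos α, r * Real.sin α) with hp₀
    set z₀ : ℂ := ((p₀.1 : ℂ) + (p₀.2 : ℂ) * Complex.I) with hz₀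
    have hz₀' : z₀ = (r : ℂ) * Complex.exp ((α : ℝ) * Complex.I) := polar_complex r α
    have hw₀ : c * z₀ = (r : ℂ) * Complex.exp ((α/2 : ℝ) * Complex.I) := by
      rw [hz₀', hc, mul_left_comm, ← Complex.exp_add]
      congr 2
      push_cast; ring
    have hw₀slit : c * z₀ ∈ Complex.slitPlane := by
      rw [hw₀]
      exact polar_mem_slitPlane r _ hr (by linarith) hα2π
    -- the set on which b = Fmap
    set V : Set ℂ := Complex.slitPlane ∩
      Complex.arg ⁻¹' Set.Ioo (-(α/2) - δ) (α/2 + δ) with hV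
    have hVopen : IsOpen V := by
      rw [isOpen_iff_mem_nhds]
      rintro w ⟨hw1, hw2⟩
      have h1 : Complex.slitPlane ∈ nhds w := Complex.isOpen_slitPlane.mem_nhds hw1
      have h2 : Complex.arg ⁻¹' Set.Ioo (-(α/2) - δ) (α/2 + δ) ∈ nhds w :=
        (Complex.continuousAt_arg hw1).preimage_mem_nhds (isOpen_Ioo.mem_nhds hw2)
      exact Filter.inter_mem h1 h2
    set U : Set (ℝ × ℝ) := (fun q : ℝ × ℝ => c * ((q.1 : ℂ) + (q.2 : ℂ) * Complex.I)) ⁻¹' V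
      with hU
    have hUopen : IsOpen U :=
      hVopen.preimage (by fun_prop)
    have hargw₀ : Complex.arg (c * z₀) = α / 2 := by
      rw [hw₀, Complex.exp_mul_I]
      exact Complex.arg_mul_cos_add_sin_mul_I hr ⟨by linarith, by linarith⟩
    have hp₀U : p₀ ∈ U := by
      have harg : Complex.arg (c * z₀) ∈ Set.Ioo (-(α/2) - δ) (α/2 + δ) := by
        rw [hargw₀]
        exact ⟨by linarith, by linarith⟩
      exact ⟨hw₀slit, harg⟩
    have hbF : ∀ q ∈ U, b q = Fmap α β q := by
      rintro q ⟨hq1, hq2⟩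
      set w : ℂ := c * ((q.1 : ℂ) + (q.2 : ℂ) * Complex.I) with hw
      have hwne : w ≠ 0 := Complex.slitPlane_ne_zero hq1
      set s : ℝ := ‖w‖ with hs
      have hspos : 0 < s := norm_pos_iff.mpr hwne
      set ψ : ℝ := Complex.arg w with hψ
      have hψIoo : ψ ∈ Set.Ioo (-(α/2) - δ) (α/2 + δ) := hq2
      have hwpolar : (s : ℂ) * Complex.exp ((ψ : ℝ) * Complex.I) = w :=
        Complex.norm_mul_exp_arg_mul_I w
      have hzq : ((q.1 : ℂ) + (q.2 : ℂ) * Complex.I)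
          = (s : ℂ) * Complex.exp (((ψ + α/2 : ℝ)) * Complex.I) := by
        have hcinv : Complex.exp (((α/2 : ℝ)) * Complex.I) * w
            = (q.1 : ℂ) + (q.2 : ℂ) * Complex.I := by
          rw [hw, ← mul_assoc, hc, ← Complex.exp_add]
          have : ((α/2 : ℝ) : ℂ) * Complex.I + ((-(α/2) : ℝ)) * Complex.I = 0 := by
            push_cast; ring
          rw [this, Complex.exp_zero, one_mul]
        rw [← hcinv, ← hwpolar, mul_left_comm, ← Complex.exp_add]
        congr 2
        push_cast; ring
    -- q = (s cos(ψ+α/2), s sin(ψ+α/2))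
      have hq : q = (s * Real.cos (ψ + α/2), s * Real.sin (ψ + α/2)) := by
        have h1 : ((q.1 : ℂ) + (q.2 : ℂ) * Complex.I)
            = ((s * Real.cos (ψ + α/2) : ℝ) : ℂ) +
              ((s * Real.sin (ψ + α/2) : ℝ) : ℂ) * Complex.I := by
          rw [hzq, polar_complex]
        simp only [Complex.ext_iff, Complex.add_re, Complex.add_im, Complex.mul_re,
          Complex.mul_im, Complex.ofReal_re, Complex.ofReal_im, Complex.I_re, Complex.I_im,
          mul_zero, mul_one, zero_mul, sub_zero, zero_sub, add_zero, zero_add, neg_zero,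
          neg_neg] at h1
        exact Prod.ext h1.1 h1.2
      have hψbound1 : -Real.pi < ψ := Complex.neg_pi_lt_arg w
      have hψbound2 : ψ ≤ Real.pi := Complex.arg_le_pi w
      rw [hq, hb s (ψ + α/2) hspos (by cases hψIoo; linarith) (by cases hψIoo; linarith),
        Fval α β s (ψ + α/2) hspos (by linarith) (by linarith)]
    have hEvEq : b =ᶠ[nhds p₀] Fmap α β :=
      Filter.eventuallyEq_of_mem (hUopen.mem_nhds hp₀U) hbF
    rw [hEvEq.fderiv_eq]
    -- compute the derivative
    have hd : HasDerivAt (gmap α β)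
        ((β : ℂ) * (c * z₀) ^ ((β : ℂ) - 1) * c *
          Complex.exp (((β*α/2) : ℝ) * Complex.I)) z₀ := gmap_hasDerivAt α β hw₀slit
    rw [Fmap_fderiv_eval α β p₀ hd (-Real.sin α, Real.cos α)]
    have hv : ((-Real.sin α : ℝ) : ℂ) + ((Real.cos α : ℝ) : ℂ) * Complex.I
        = Complex.exp (((α + Real.pi/2 : ℝ)) * Complex.I) := by
      rw [Complex.exp_mul_I, ← Complex.ofReal_cos, ← Complex.ofReal_sin,
        Real.cos_add_pi_div_two, Real.sin_add_pi_div_two]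
    have hcpow : (c * z₀) ^ ((β : ℂ) - 1)
        = ((r ^ (β - 1) : ℝ) : ℂ) * Complex.exp (((β - 1) * (α/2) : ℝ) * Complex.I) := by
      rw [hw₀]
      have := cpow_polar r (α/2) (β - 1) hr (by linarith) (by linarith)
      rw [← this]
      norm_cast
    show ((((-Real.sin α : ℝ) : ℂ) + ((Real.cos α : ℝ) : ℂ) * Complex.I) *
        ((β : ℂ) * (c * z₀) ^ ((β : ℂ) - 1) * c *
          Complex.exp (((β*α/2) : ℝ) * Complex.I))).im = 0
    rw [hv, hcpow, hc]
    have hexp : Complex.exp (((α + Real.pi/2 : ℝ)) * Complex.I) *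
        ((β : ℂ) * (((r ^ (β - 1) : ℝ) : ℂ) *
          Complex.exp (((β - 1) * (α/2) : ℝ) * Complex.I)) *
          Complex.exp ((-(α/2) : ℝ) * Complex.I) *
          Complex.exp (((β*α/2) : ℝ) * Complex.I))
        = (β : ℂ) * ((r ^ (β - 1) : ℝ) : ℂ) *
          Complex.exp ((Real.pi : ℝ) * Complex.I) := by
      rw [mul_comm]
      calc _ = (β : ℂ) * ((r ^ (β - 1) : ℝ) : ℂ) *
          (Complex.exp (((β - 1) * (α/2) : ℝ) * Complex.I) *
           Complex.exp ((-(α/2) : ℝ) * Complex.I) *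
           Complex.exp (((β*α/2) : ℝ) * Complex.I) *
           Complex.exp (((α + Real.pi/2 : ℝ)) * Complex.I)) := by ring
      _ = _ := by
        have hexp2 : (((β - 1) * (α/2) : ℝ) : ℂ) * Complex.I + ((-(α/2) : ℝ)) * Complex.I
            + ((β*α/2 : ℝ)) * Complex.I + ((α + Real.pi/2 : ℝ)) * Complex.I
            = ((Real.pi : ℝ) : ℂ) * Complex.I := by
          have hβαC : (β : ℂ) * (α : ℂ) = (Real.pi : ℂ) / 2 := by
            rw [← Complex.ofReal_mul, hβα]
            push_cast
            ring
          rw [← add_mul, ← add_mul, ← add_mul]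
          push_cast
          linear_combination Complex.I * hβαC
        rw [← Complex.exp_add, ← Complex.exp_add, ← Complex.exp_add, hexp2]
    rw [hexp]
    have : Complex.exp ((Real.pi : ℝ) * Complex.I) = -1 := by
      push_cast
      exact Complex.exp_pi_mul_I
    rw [this]
    norm_cast
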